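/- The set A^+_α = {X : P(X < 0) ≤ 1-α} is closed under convergence in probability: if X_n ∈ A^+_α for all n and X_n → X in probability, then X ∈ A^+_α. -/

import Mathlib

open MeasureTheory

variable {Ω : Type*} [MeasurableSpace Ω]

/-- `A⁺_α = {X : P(X < 0) ≤ 1 - α}` is closed under convergence in probability. -/
theorem stmt_13 (μ : Measure Ω) [IsProbabilityMeasure μ]
    (α : ℝ) (hα : α ∈ Set.Icc (0 : ℝ) 1)
    (Xn : ℕ → Ω → ℝ) (X : Ω → ℝ)
    (hmem : ∀ n, (μ {ω | Xn n ω < 0}).toReal ≤ 1 - α)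
    (hconv : TendstoInMeasure μ Xn Filter.atTop X) :
    (μ {ω | X ω < 0}).toReal ≤ 1 - α := by
  have h1α : (0:ℝ) ≤ 1 - α := by linarith [hα.2]
  -- ENNReal version of hmem
  have hmem' : ∀ n, μ {ω | Xn n ω < 0} ≤ ENNReal.ofReal (1 - α) := by
    intro n
    rw [← ENNReal.ofReal_toReal (measure_ne_top μ _)]
    exact ENNReal.ofReal_le_ofReal (hmem n)
  -- for each ε > 0, μ {X < -ε} ≤ ofReal (1-α)
  have key : ∀ ε : ℝ, 0 < ε → μ {ω | X ω < -ε} ≤ ENNReal.ofReal (1 - α) := by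
    intro ε hε
    have hsub : ∀ n, {ω | X ω < -ε} ⊆ {ω | Xn n ω < 0} ∪ {ω | ε ≤ dist (Xn n ω) (X ω)} := by
      intro n ω hω
      by_cases h : ε ≤ dist (Xn n ω) (X ω)
      · exact Or.inr h
      · left
        push_neg at h
        rw [Real.dist_eq, abs_lt] at h
        simp only [Set.mem_setOf_eq] at hω ⊢
        linarith [h.2]
    have hb : ∀ n, μ {ω | X ω < -ε} ≤ ENNReal.ofReal (1 - α) + μ {ω | ε ≤ dist (Xn n ω) (X ω)} :=
      fun n => le_trans (measure_mono (hsub n))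
        (le_trans (measure_union_le _ _) (add_le_add (hmem' n) le_rfl))
    have hlim : Filter.Tendsto (fun n => ENNReal.ofReal (1 - α) + μ {ω | ε ≤ dist (Xn n ω) (X ω)})
        Filter.atTop (nhds (ENNReal.ofReal (1 - α) + 0)) :=
      Filter.Tendsto.const_add _ (tendstoInMeasure_iff_dist.mp hconv ε hε)
    rw [add_zero] at hlim
    exact ge_of_tendsto hlim (Filter.Eventually.of_forall hb)
  -- {X < 0} = ⋃ k, {X < -1/(k+1)}
  have hUnion : {ω | X ω < 0} = ⋃ k : ℕ, {ω | X ω < -(1 / (k + 1 : ℝ))} := by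
    ext ω
    simp only [Set.mem_setOf_eq, Set.mem_iUnion]
    constructor
    · intro h
      obtain ⟨k, hk⟩ := exists_nat_one_div_lt (show (0:ℝ) < -X ω by linarith)
      exact ⟨k, by linarith⟩
    · rintro ⟨k, hk⟩
      have : (0:ℝ) < 1 / (k + 1 : ℝ) := by positivity
      linarith
  have hmono : Monotone (fun k : ℕ => {ω | X ω < -(1 / (k + 1 : ℝ))}) := by
    intro i j hij ω hω
    simp only [Set.mem_setOf_eq] at hω ⊢
    have h1 : (1 : ℝ) / (j + 1) ≤ 1 / (i + 1) := by
      apply one_div_le_one_div_of_le (by positivity)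
      exact_mod_cast by omega
    linarith
  have htend := tendsto_measure_iUnion_atTop (μ := μ) hmono
  rw [← hUnion] at htend
  have hfin : μ {ω | X ω < 0} ≤ ENNReal.ofReal (1 - α) :=
    le_of_tendsto htend (Filter.Eventually.of_forall fun k => key _ (by positivity))
  calc (μ {ω | X ω < 0}).toReal ≤ (ENNReal.ofReal (1 - α)).toReal :=
        ENNReal.toReal_mono ENNReal.ofReal_ne_top hfin
    _ = 1 - α := ENNReal.toReal_ofReal h1α
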